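/- arXiv:2605.09901 — 2 statements merged into one kernel-verified Lean document; each statement's English description precedes it below -/
import Mathlib

section
/- Let γ̃ : [0,1] → 𝕆 be a continuous path in the octonions and let δ > 0. Then there exist continuous paths γ : [0,1] → ℂ and Θ : [0,1] → 𝕊 (into the sphere of imaginary units) such that the circular lifting γ_Θ(t) := τ_{Θ(t)}(γ(t)) satisfies γ_Θ(0) = γ̃(0), γ_Θ(1) = γ̃(1), and sup_{t ∈ [0,1]} |γ̃(t) - γ_Θ(t)| < δ. -/
noncomputable section

/-- The octonions, realized as the Cayley–Dickson double of the quaternions. -/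
@[ext] structure Octonion : Type where
  a : Quaternion ℝ
  b : Quaternion ℝ

notation "𝕆" => Octonion

namespace Octonion

instance : Zero 𝕆 := ⟨⟨0, 0⟩⟩
instance : One 𝕆 := ⟨⟨1, 0⟩⟩
instance : Add 𝕆 := ⟨fun x y => ⟨x.a + y.a, x.b + y.b⟩⟩
instance : Neg 𝕆 := ⟨fun x => ⟨-x.a, -x.b⟩⟩
instance : Sub 𝕆 := ⟨fun x y => ⟨x.a - y.a, x.b - y.b⟩⟩
/-- Cayley–Dickson multiplication. -/
instance : Mul 𝕆 := ⟨fun x y => ⟨x.a * y.a - star y.b * x.b, y.b * x.a + x.b * star y.a⟩⟩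
instance : SMul ℝ 𝕆 := ⟨fun r x => ⟨r • x.a, r • x.b⟩⟩
instance : SMul ℕ 𝕆 := ⟨fun n x => ⟨n • x.a, n • x.b⟩⟩
instance : SMul ℤ 𝕆 := ⟨fun n x => ⟨n • x.a, n • x.b⟩⟩

def toProd (x : 𝕆) : Quaternion ℝ × Quaternion ℝ := (x.a, x.b)

lemma toProd_injective : Function.Injective toProd := by
  intro x y h
  cases x; cases y
  simpa [toProd, Prod.ext_iff, Octonion.mk.injEq] using h

instance : AddCommGroup 𝕆 :=
  Function.Injective.addCommGroup toProd toProd_injective rfl (fun _ _ => rfl) (fun _ => rfl)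
    (fun _ _ => rfl) (fun _ _ => rfl) (fun _ _ => rfl)

def toProdHom : 𝕆 →+ Quaternion ℝ × Quaternion ℝ :=
  { toFun := toProd, map_zero' := rfl, map_add' := fun _ _ => rfl }

instance : Module ℝ 𝕆 :=
  Function.Injective.module ℝ toProdHom toProd_injective (fun _ _ => rfl)

def toProdLin : 𝕆 →ₗ[ℝ] Quaternion ℝ × Quaternion ℝ :=
  { toFun := toProd, map_add' := fun _ _ => rfl, map_smul' := fun _ _ => rfl }

instance : NormedAddCommGroup 𝕆 := NormedAddCommGroup.induced 𝕆 _ toProdHom toProd_injective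
instance : NormedSpace ℝ 𝕆 := NormedSpace.induced ℝ 𝕆 _ toProdLin

/-- Octonionic conjugation. -/
def conj (x : 𝕆) : 𝕆 := ⟨star x.a, -x.b⟩

/-- The real part of an octonion. -/
def re (x : 𝕆) : ℝ := x.a.re

/-- The imaginary part of an octonion. -/
def im (x : 𝕆) : 𝕆 := ⟨x.a.im, x.b⟩

/-- The squared (Euclidean) norm of an octonion. -/
def normSq (x : 𝕆) : ℝ := Quaternion.normSq x.a + Quaternion.normSq x.b

/-- The (Euclidean) norm of an octonion. -/
def onorm (x : 𝕆) : ℝ := Real.sqrt (normSq x)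

instance : Inv 𝕆 := ⟨fun x => (normSq x)⁻¹ • conj x⟩

/-- The sphere of imaginary units of `𝕆`. -/
def sph : Set 𝕆 := {I | onorm I = 1 ∧ re I = 0}

/-- `tau I (α + β i) = α + β I`. -/
def tau (I : 𝕆) (z : ℂ) : 𝕆 := z.re • (1 : 𝕆) + z.im • I

end Octonion

-- ============ NEW MATERIAL ============

open Octonion

local notation "E8" => EuclideanSpace ℝ (Fin 8)

def octToE : 𝕆 →ₗ[ℝ] E8 where
  toFun x := WithLp.toLp 2 ![x.a.re, x.a.imI, x.a.imJ, x.a.imK, x.b.re, x.b.imI, x.b.imJ, x.b.imK]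
  map_add' x y := by
    ext i
    fin_cases i <;> rfl
  map_smul' r x := by
    ext i
    fin_cases i <;> rfl

def eToOct : E8 →ₗ[ℝ] 𝕆 where
  toFun v := ⟨⟨v 0, v 1, v 2, v 3⟩, ⟨v 4, v 5, v 6, v 7⟩⟩
  map_add' u v := rfl
  map_smul' r v := rfl

lemma eToOct_octToE (x : 𝕆) : eToOct (octToE x) = x := rfl

lemma octToE_eToOct (v : E8) : octToE (eToOct v) = v := by
  ext i
  fin_cases i <;> rfl

instance : FiniteDimensional ℝ 𝕆 :=
  Module.Finite.of_surjective eToOct (fun x => ⟨octToE x, eToOct_octToE x⟩)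

lemma octToE_injective : Function.Injective octToE := by
  intro x y h
  have := congrArg eToOct h
  simpa [eToOct_octToE] using this

lemma octToE_continuous : Continuous octToE := octToE.continuous_of_finiteDimensional
lemma eToOct_continuous : Continuous eToOct := eToOct.continuous_of_finiteDimensional

lemma onorm_eq (x : 𝕆) : onorm x = ‖octToE x‖ := by
  rw [EuclideanSpace.norm_eq, onorm, normSq, Quaternion.normSq_def', Quaternion.normSq_def',
    Fin.sum_univ_eight]
  rw [show (octToE x 0) = x.a.re from rfl, show (octToE x 1) = x.a.imI from rfl,
    show (octToE x 2) = x.a.imJ from rfl, show (octToE x 3) = x.a.imK from rfl,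
    show (octToE x 4) = x.b.re from rfl, show (octToE x 5) = x.b.imI from rfl,
    show (octToE x 6) = x.b.imJ from rfl, show (octToE x 7) = x.b.imK from rfl]
  simp only [Real.norm_eq_abs, sq_abs]
  ring_nf

lemma re_eq (x : 𝕆) : re x = octToE x 0 := rfl

lemma octToE_one : octToE 1 = EuclideanSpace.single 0 1 := by
  ext i
  fin_cases i <;> simp [octToE, EuclideanSpace.single_apply] <;> rfl

-- clamp and lemmas
open Set in
def clamp (s : ℝ) : ℝ := max 0 (min 1 s)

lemma clamp_nonneg (s : ℝ) : 0 ≤ clamp s := le_max_left _ _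
lemma clamp_le_one (s : ℝ) : clamp s ≤ 1 := max_le zero_le_one (min_le_left _ _)
lemma clamp_of_nonpos {s : ℝ} (h : s ≤ 0) : clamp s = 0 := by
  simp [clamp, max_eq_left, min_le_of_right_le h]
lemma clamp_of_one_le {s : ℝ} (h : 1 ≤ s) : clamp s = 1 := by
  simp [clamp, min_eq_left h]
lemma clamp_of_mem {s : ℝ} (h0 : 0 ≤ s) (h1 : s ≤ 1) : clamp s = s := by
  simp [clamp, min_eq_right h1, max_eq_right h0]
lemma continuous_clamp : Continuous clamp :=
  continuous_const.max (continuous_const.min continuous_id)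

lemma three_on_line {a d : E8} {r s₁ s₂ s₃ : ℝ}
    (h1 : ‖a + s₁ • d‖ = r) (h2 : ‖a + s₂ • d‖ = r) (h3 : ‖a + s₃ • d‖ = r)
    (h12 : s₁ ≠ s₂) (h13 : s₁ ≠ s₃) (h23 : s₂ ≠ s₃) : d = 0 := by
  have key : ∀ s : ℝ, ‖a + s • d‖ = r →
      ‖a‖^2 + 2 * s * inner ℝ a d + s^2 * ‖d‖^2 = r^2 := by
    intro s hs
    have := norm_add_sq_real a (s • d)
    rw [hs] at this
    rw [real_inner_smul_right, norm_smul] at this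
    have h2 : (‖s‖ * ‖d‖)^2 = s^2 * ‖d‖^2 := by
      simp [Real.norm_eq_abs, mul_pow, sq_abs]
    linarith [this, h2]
  have k1 := key _ h1
  have k2 := key _ h2
  have k3 := key _ h3
  have e12 : 2 * inner ℝ a d + (s₁ + s₂) * ‖d‖^2 = 0 := by
    have hne : s₁ - s₂ ≠ 0 := sub_ne_zero.mpr h12
    have : (s₁ - s₂) * (2 * inner ℝ a d + (s₁ + s₂) * ‖d‖^2) = 0 := by nlinarith [k1, k2]
    exact (mul_eq_zero.mp this).resolve_left hne
  have e13 : 2 * inner ℝ a d + (s₁ + s₃) * ‖d‖^2 = 0 := by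
    have hne : s₁ - s₃ ≠ 0 := sub_ne_zero.mpr h13
    have : (s₁ - s₃) * (2 * inner ℝ a d + (s₁ + s₃) * ‖d‖^2) = 0 := by nlinarith [k1, k3]
    exact (mul_eq_zero.mp this).resolve_left hne
  have hd : ‖d‖^2 = 0 := by
    have hne : s₂ - s₃ ≠ 0 := sub_ne_zero.mpr h23
    have : (s₂ - s₃) * ‖d‖^2 = 0 := by nlinarith [e12, e13]
    exact (mul_eq_zero.mp this).resolve_left hne
  simpa using hd

/-- circle in the (1,2)-coordinate plane -/
def Ycirc (r θ : ℝ) : E8 :=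
  WithLp.toLp 2 ![0, r * Real.cos θ, r * Real.sin θ, 0, 0, 0, 0, 0]

lemma Ycirc_zero (r θ : ℝ) : Ycirc r θ 0 = 0 := rfl

lemma Ycirc_norm (r θ : ℝ) (hr : 0 ≤ r) : ‖Ycirc r θ‖ = r := by
  rw [EuclideanSpace.norm_eq]
  have h : ∀ i : Fin 8, ‖Ycirc r θ i‖^2 = (Ycirc r θ i)^2 := fun i => sq_abs _
  simp only [h]
  rw [Fin.sum_univ_eight]
  rw [show Ycirc r θ 0 = 0 from rfl, show Ycirc r θ 1 = r * Real.cos θ from rfl,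
    show Ycirc r θ 2 = r * Real.sin θ from rfl, show Ycirc r θ 3 = 0 from rfl,
    show Ycirc r θ 4 = 0 from rfl, show Ycirc r θ 5 = 0 from rfl,
    show Ycirc r θ 6 = 0 from rfl, show Ycirc r θ 7 = 0 from rfl]
  rw [show (0:ℝ)^2 + (r * Real.cos θ)^2 + (r * Real.sin θ)^2 + 0^2 + 0^2 + 0^2 + 0^2 + 0^2
      = r^2 * (Real.cos θ^2 + Real.sin θ^2) by ring]
  rw [Real.cos_sq_add_sin_sq]
  simpa using Real.sqrt_sq hr

lemma Ycirc_injOn (r : ℝ) (hr : 0 < r) : Set.InjOn (Ycirc r) (Set.Ico 0 Real.pi) := by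
  intro θ₁ h₁ θ₂ h₂ h
  have h1 : r * Real.cos θ₁ = r * Real.cos θ₂ := congrFun (congrArg WithLp.ofLp h) (1 : Fin 8)
  have hc : Real.cos θ₁ = Real.cos θ₂ := mul_left_cancel₀ hr.ne' h1
  exact Real.injOn_cos ⟨h₁.1, h₁.2.le⟩ ⟨h₂.1, h₂.2.le⟩ hc

/-- Avoidance: there is a point of norm `r`, vanishing 0-coordinate, avoiding finitely
many lines. -/
lemma exists_good_y (r : ℝ) (hr : 0 < r) (n : ℕ) (A D : ℕ → E8) :
    ∃ y : E8, ‖y‖ = r ∧ y 0 = 0 ∧ ∀ k < n, ∀ s : ℝ, y ≠ A k + s • D k := by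
  classical
  set bad : ℕ → Set ℝ := fun k => {θ ∈ Set.Ico 0 Real.pi | ∃ s : ℝ, Ycirc r θ = A k + s • D k}
  have hbadfin : ∀ k, (bad k).Finite := by
    intro k
    by_contra hinf
    have hinf : (bad k).Infinite := hinf
    obtain ⟨θ₁, hθ₁⟩ := hinf.nonempty
    have hinf2 : (bad k \ {θ₁}).Infinite := hinf.diff (Set.finite_singleton _)
    obtain ⟨θ₂, hθ₂⟩ := hinf2.nonempty
    have hinf3 : (bad k \ {θ₁, θ₂}).Infinite := hinf.diff (Set.toFinite _)
    obtain ⟨θ₃, hθ₃⟩ := hinf3.nonempty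
    have hb₂ := hθ₂.1
    have hb₃ := hθ₃.1
    have h12 : θ₁ ≠ θ₂ := fun h => hθ₂.2 (by simp [h.symm])
    have h13 : θ₁ ≠ θ₃ := fun h => hθ₃.2 (by simp [h.symm])
    have h23 : θ₂ ≠ θ₃ := fun h => hθ₃.2 (by simp [h.symm])
    obtain ⟨hmem₁, s₁, hs₁⟩ := hθ₁
    obtain ⟨hmem₂, s₂, hs₂⟩ := hb₂
    obtain ⟨hmem₃, s₃, hs₃⟩ := hb₃
    have hY12 : Ycirc r θ₁ ≠ Ycirc r θ₂ := fun h => h12 (Ycirc_injOn r hr hmem₁ hmem₂ h)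
    have hY13 : Ycirc r θ₁ ≠ Ycirc r θ₃ := fun h => h13 (Ycirc_injOn r hr hmem₁ hmem₃ h)
    have hY23 : Ycirc r θ₂ ≠ Ycirc r θ₃ := fun h => h23 (Ycirc_injOn r hr hmem₂ hmem₃ h)
    have hs12 : s₁ ≠ s₂ := by
      intro h; apply hY12; rw [hs₁, hs₂, h]
    have hs13 : s₁ ≠ s₃ := by
      intro h; apply hY13; rw [hs₁, hs₃, h]
    have hs23 : s₂ ≠ s₃ := by
      intro h; apply hY23; rw [hs₂, hs₃, h]
    have hd : D k = 0 := by
      refine three_on_line (a := A k) (r := r) ?_ ?_ ?_ hs12 hs13 hs23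
      · rw [← hs₁]; exact Ycirc_norm r θ₁ hr.le
      · rw [← hs₂]; exact Ycirc_norm r θ₂ hr.le
      · rw [← hs₃]; exact Ycirc_norm r θ₃ hr.le
    apply hY12
    rw [hs₁, hs₂, hd]
    simp
  have htotfin : (⋃ k ∈ Finset.range n, bad k).Finite :=
    Set.Finite.biUnion (Finset.finite_toSet _) (fun k _ => hbadfin k)
  have hIco : (Set.Ico (0:ℝ) Real.pi).Infinite := Set.Ico_infinite Real.pi_pos
  obtain ⟨θ, hθ⟩ := (hIco.diff htotfin).nonempty
  refine ⟨Ycirc r θ, Ycirc_norm r θ hr.le, Ycirc_zero r θ, ?_⟩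
  intro k hk s hy
  exact hθ.2 (Set.mem_biUnion (Finset.mem_range.mpr hk) ⟨hθ.1, s, hy⟩)

def pr0 : E8 →ₗ[ℝ] ℝ where
  toFun v := v 0
  map_add' _ _ := rfl
  map_smul' _ _ := rfl

lemma pr0_apply (v : E8) : pr0 v = v 0 := rfl

set_option maxHeartbeats 2000000 in
theorem euclid_main (m : ℝ → E8) (hm : UniformContinuous m)
    (him : ∀ t, m t 0 = 0) {δ : ℝ} (hδ : 0 < δ) :
    ∃ c : ℝ → ℝ, ∃ Θ : ℝ → E8,
      Continuous c ∧ ContinuousOn Θ (Set.Icc 0 1) ∧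
      (∀ t ∈ Set.Icc (0:ℝ) 1, ‖Θ t‖ = 1 ∧ Θ t 0 = 0) ∧
      c 0 • Θ 0 = m 0 ∧ c 1 • Θ 1 = m 1 ∧
      (∀ t ∈ Set.Icc (0:ℝ) 1, ‖m t - c t • Θ t‖ < δ) := by
  classical
  set ε := δ / 10 with hεdef
  have hε : 0 < ε := by positivity
  obtain ⟨η, hη, hmod⟩ := Metric.uniformContinuous_iff.mp hm ε hε
  obtain ⟨n, hn2, hnη⟩ : ∃ n : ℕ, 2 ≤ n ∧ 1 / (n:ℝ) < η := by
    obtain ⟨k, hk⟩ := exists_nat_gt (max 2 (1/η))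
    have hk2 : (2:ℝ) ≤ k := le_of_lt (lt_of_le_of_lt (le_max_left _ _) hk)
    have hkpos : (0:ℝ) < k := by linarith
    refine ⟨k, by exact_mod_cast hk2, ?_⟩
    have h1 : 1/η < k := lt_of_le_of_lt (le_max_right _ _) hk
    rw [div_lt_iff₀ hη] at h1
    rw [div_lt_iff₀ hkpos]
    linarith [h1]
  have hn0 : (0:ℝ) < (n:ℝ) := by exact_mod_cast (by omega : 0 < n)
  have hnR2 : (2:ℝ) ≤ (n:ℝ) := by exact_mod_cast hn2
  have hhalf : 1/(n:ℝ) + 1/(n:ℝ) ≤ 1 := by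
    rw [← add_div, div_le_one hn0]; norm_num; linarith
  have hstep : ∀ s t : ℝ, |s - t| ≤ 1/(n:ℝ) → ‖m s - m t‖ ≤ ε := by
    intro s t h
    have hd : dist s t < η := lt_of_le_of_lt (by rwa [Real.dist_eq]) hnη
    have := hmod hd
    rw [dist_eq_norm] at this
    exact this.le
  set P : ℕ → E8 := fun j => m ((j:ℝ) / n) with hPdef
  have hP0 : ∀ j, P j 0 = 0 := fun j => him _
  have hPm0 : P 0 = m 0 := by simp [hPdef]
  have hPm1 : P n = m 1 := by
    simp only [hPdef]
    rw [div_self hn0.ne']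
  have hPadj : ∀ k : ℕ, ‖P (k+1) - P k‖ ≤ ε := by
    intro k
    apply hstep
    rw [show (((k+1:ℕ)):ℝ) = (k:ℝ)+1 by push_cast; ring]
    rw [show ((k:ℝ)+1) / n - (k:ℝ)/n = 1/n by ring]
    rw [abs_of_nonneg (by positivity)]
  set M : ℝ → E8 := fun t => P 0 + ∑ j ∈ Finset.range n, clamp ((n:ℝ)*t - j) • (P (j+1) - P j)
    with hMdef
  have hseg : ∀ k, k < n → ∀ t : ℝ, (k:ℝ)/n ≤ t → t ≤ ((k:ℝ)+1)/n →
      M t = P k + clamp ((n:ℝ)*t - k) • (P (k+1) - P k) := by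
    intro k hk t h1 h2
    have hnt1 : (k:ℝ) ≤ n * t := by
      rw [div_le_iff₀ hn0] at h1; linarith
    have hnt2 : (n:ℝ) * t ≤ (k:ℝ) + 1 := by
      rw [le_div_iff₀ hn0] at h2; linarith
    have hsplit := Finset.sum_range_add_sum_Ico
      (fun j => clamp ((n:ℝ)*t - j) • (P (j+1) - P j)) (by omega : k+1 ≤ n)
    simp only [hMdef]
    rw [← hsplit]
    have hz : ∑ j ∈ Finset.Ico (k+1) n, clamp ((n:ℝ)*t - j) • (P (j+1) - P j) = 0 := by
      apply Finset.sum_eq_zero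
      intro j hj
      have hj' : k + 1 ≤ j := (Finset.mem_Ico.mp hj).1
      have hj'' : ((k:ℝ)+1) ≤ (j:ℝ) := by exact_mod_cast hj'
      rw [clamp_of_nonpos (by linarith), zero_smul]
    rw [hz, add_zero, Finset.sum_range_succ]
    have ho : ∑ j ∈ Finset.range k, clamp ((n:ℝ)*t - j) • (P (j+1) - P j)
        = ∑ j ∈ Finset.range k, (P (j+1) - P j) := by
      apply Finset.sum_congr rfl
      intro j hj
      have hj' : j < k := Finset.mem_range.mp hj
      have hj'' : (j:ℝ) + 1 ≤ (k:ℝ) := by exact_mod_cast hj'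
      rw [clamp_of_one_le (by linarith), one_smul]
    rw [ho, Finset.sum_range_sub (fun j => P j)]
    abel
  -- perturbation directions to avoid
  set A : ℕ → E8 := fun k =>
    if k = 0 ∧ P 0 ≠ 0 then -(P 1 - P 0)
    else if k = n-1 ∧ P n ≠ 0 then P n - P (n-1) else -(P k) with hAdef
  set D : ℕ → E8 := fun k =>
    if k = 0 ∧ P 0 ≠ 0 then -(P 0)
    else if k = n-1 ∧ P n ≠ 0 then -(P n) else -(P (k+1) - P k) with hDdef
  obtain ⟨y, hynorm, hy00, hyavoid⟩ := exists_good_y (2*ε) (by positivity) n A D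
  set β₀ : ℝ → ℝ := fun t => if P 0 = 0 then 1 else clamp ((n:ℝ) * t) with hβ₀def
  set β₁ : ℝ → ℝ := fun t => if P n = 0 then 1 else clamp ((n:ℝ) * (1 - t)) with hβ₁def
  set α₀ : ℝ → ℝ := fun t => if P 0 = 0 then clamp ((n:ℝ) * t) else 1 with hα₀def
  set α₁ : ℝ → ℝ := fun t => if P n = 0 then clamp ((n:ℝ) * (1 - t)) else 1 with hα₁def
  have hβ₀mem : ∀ t, 0 ≤ β₀ t ∧ β₀ t ≤ 1 := by
    intro t; simp only [hβ₀def]; split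
    · exact ⟨zero_le_one, le_refl 1⟩
    · exact ⟨clamp_nonneg _, clamp_le_one _⟩
  have hβ₁mem : ∀ t, 0 ≤ β₁ t ∧ β₁ t ≤ 1 := by
    intro t; simp only [hβ₁def]; split
    · exact ⟨zero_le_one, le_refl 1⟩
    · exact ⟨clamp_nonneg _, clamp_le_one _⟩
  have hα₀mem : ∀ t, 0 ≤ α₀ t ∧ α₀ t ≤ 1 := by
    intro t; simp only [hα₀def]; split
    · exact ⟨clamp_nonneg _, clamp_le_one _⟩
    · exact ⟨zero_le_one, le_refl 1⟩
  have hα₁mem : ∀ t, 0 ≤ α₁ t ∧ α₁ t ≤ 1 := by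
    intro t; simp only [hα₁def]; split
    · exact ⟨clamp_nonneg _, clamp_le_one _⟩
    · exact ⟨zero_le_one, le_refl 1⟩
  have hβ₀one : ∀ t : ℝ, 1/(n:ℝ) ≤ t → β₀ t = 1 := by
    intro t ht; simp only [hβ₀def]; split
    · rfl
    · apply clamp_of_one_le
      rw [div_le_iff₀ hn0] at ht; linarith [ht]
  have hβ₁one : ∀ t : ℝ, t ≤ 1 - 1/(n:ℝ) → β₁ t = 1 := by
    intro t ht; simp only [hβ₁def]; split
    · rfl
    · apply clamp_of_one_le
      have h1 : 1/(n:ℝ) ≤ 1 - t := by linarith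
      rw [div_le_iff₀ hn0] at h1
      nlinarith [h1]
  set N : ℝ → E8 := fun t => M t + (β₀ t * β₁ t) • y with hNdef
  have hsegex : ∀ t : ℝ, 0 ≤ t → t ≤ 1 → ∃ k, k < n ∧ (k:ℝ)/n ≤ t ∧ t ≤ ((k:ℝ)+1)/n := by
    intro t ht0 ht1
    refine ⟨min (n-1) ⌊t * (n:ℝ)⌋₊, lt_of_le_of_lt (min_le_left _ _) (by omega), ?_, ?_⟩
    · have h1 : ((min (n-1) ⌊t * (n:ℝ)⌋₊ : ℕ):ℝ) ≤ (⌊t * (n:ℝ)⌋₊ : ℝ) := by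
        exact_mod_cast min_le_right _ _
      have h2 : (⌊t * (n:ℝ)⌋₊ : ℝ) ≤ t * n := Nat.floor_le (by positivity)
      rw [div_le_iff₀ hn0]
      linarith
    · rcases le_or_gt ⌊t * (n:ℝ)⌋₊ (n-1) with hc | hc
      · rw [min_eq_right hc]
        have h2 : t * n < (⌊t * (n:ℝ)⌋₊ : ℝ) + 1 := Nat.lt_floor_add_one _
        rw [le_div_iff₀ hn0]
        linarith
      · rw [min_eq_left (by omega)]
        have hcast : (((n-1:ℕ)):ℝ) = (n:ℝ) - 1 := by
          rw [Nat.cast_sub (by omega)]; norm_num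
        rw [le_div_iff₀ hn0, hcast]
        nlinarith [ht1, hn0]
  -- nonvanishing of N on [0,1]
  have hNne : ∀ t : ℝ, 0 ≤ t → t ≤ 1 → N t ≠ 0 := by
    intro t ht0 ht1 hzero
    obtain ⟨k, hk, hl, hr⟩ := hsegex t ht0 ht1
    have hMt := hseg k hk t hl hr
    set σ := clamp ((n:ℝ)*t - k) with hσdef
    have hσ0 : 0 ≤ σ := clamp_nonneg _
    have hσ1 : σ ≤ 1 := clamp_le_one _
    simp only [hNdef, hMt] at hzero
    by_cases hc0 : k = 0 ∧ P 0 ≠ 0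
    · obtain ⟨hk0, hP0ne⟩ := hc0
      subst hk0
      have hβ₀t : β₀ t = σ := by
        simp only [hβ₀def, if_neg hP0ne, hσdef]
        norm_num
      have hβ₁t : β₁ t = 1 := by
        apply hβ₁one
        have ht' : t ≤ 1/(n:ℝ) := by
          rw [le_div_iff₀ hn0] at hr ⊢
          push_cast at hr
          linarith
        linarith
      rw [hβ₀t, hβ₁t, mul_one] at hzero
      by_cases hσz : σ = 0
      · rw [hσz] at hzero
        simp only [zero_smul, add_zero, Nat.cast_zero, sub_zero, zero_add] at hzero
        exact hP0ne (by simpa using hzero)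
      · apply hyavoid 0 (by omega) σ⁻¹
        have hy' : σ • y = -(P 0 + σ • (P (0+1) - P 0)) :=
          eq_neg_of_add_eq_zero_left (by rwa [add_comm] at hzero)
        have hinj : Function.Injective (fun v : E8 => σ • v) := smul_right_injective E8 hσz
        apply hinj
        simp only [hAdef, hDdef,
          if_pos (show (0:ℕ) = 0 ∧ P 0 ≠ 0 from ⟨rfl, hP0ne⟩)]
        show σ • y = σ • (-(P 1 - P 0) + σ⁻¹ • -(P 0))
        rw [hy', smul_add, smul_smul, mul_inv_cancel₀ hσz, one_smul]
        module
    · by_cases hcn : k = n-1 ∧ P n ≠ 0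
      · obtain ⟨hkn, hPnne⟩ := hcn
        have hcast : ((k:ℕ):ℝ) = (n:ℝ) - 1 := by
          rw [hkn, Nat.cast_sub (by omega)]; norm_num
        have hk1n : k + 1 = n := by omega
        have hβ₀t : β₀ t = 1 := by
          apply hβ₀one
          have h1k : (1:ℝ) ≤ (k:ℝ) := by rw [hcast]; linarith
          calc 1/(n:ℝ) ≤ (k:ℝ)/n := by
                rw [div_le_div_iff₀ hn0 hn0]; nlinarith
            _ ≤ t := hl
        have hσval : σ = (n:ℝ)*t - k := by
          rw [hσdef]
          apply clamp_of_mem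
          · rw [div_le_iff₀ hn0] at hl; linarith
          · rw [le_div_iff₀ hn0] at hr; linarith
        have hβ₁t : β₁ t = 1 - σ := by
          simp only [hβ₁def, if_neg hPnne]
          rw [show (n:ℝ) * (1 - t) = 1 - ((n:ℝ)*t - k) by rw [hcast]; ring]
          rw [← hσval]
          apply clamp_of_mem <;> linarith
        rw [hβ₀t, hβ₁t, one_mul, hk1n] at hzero
        by_cases hσ1' : σ = 1
        · rw [hσ1'] at hzero
          simp only [one_smul, sub_self, zero_smul, add_zero] at hzero
          apply hPnne
          rwa [show P k + (P n - P k) = P n from by abel] at hzero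
        · have h1σ : (1:ℝ) - σ ≠ 0 := by
            intro h; exact hσ1' (by linarith [h])
          apply hyavoid k hk (1-σ)⁻¹
          have hy' : (1-σ) • y = -(P k + σ • (P n - P k)) :=
            eq_neg_of_add_eq_zero_left (by rwa [add_comm] at hzero)
          have hinj : Function.Injective (fun v : E8 => (1-σ) • v) :=
            smul_right_injective E8 h1σ
          apply hinj
          simp only [hAdef, hDdef, if_neg hc0,
            if_pos (show k = n-1 ∧ P n ≠ 0 from ⟨hkn, hPnne⟩)]
          show (1-σ) • y = (1-σ) • ((P n - P (n-1)) + (1-σ)⁻¹ • -(P n))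
          rw [hy', smul_add, smul_smul, mul_inv_cancel₀ h1σ, one_smul]
          rw [show n - 1 = k from hkn.symm]
          module
      · have hβ₀t : β₀ t = 1 := by
          by_cases h0 : P 0 = 0
          · simp only [hβ₀def, if_pos h0]
          · apply hβ₀one
            have hkne : k ≠ 0 := fun h => hc0 ⟨h, h0⟩
            have h1k : (1:ℝ) ≤ (k:ℝ) := by exact_mod_cast (by omega : 1 ≤ k)
            calc 1/(n:ℝ) ≤ (k:ℝ)/n := by
                  rw [div_le_div_iff₀ hn0 hn0]; nlinarith
              _ ≤ t := hl
        have hβ₁t : β₁ t = 1 := by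
          by_cases h1 : P n = 0
          · simp only [hβ₁def, if_pos h1]
          · apply hβ₁one
            have hkne : k ≠ n-1 := fun h => hcn ⟨h, h1⟩
            have hkle : k + 2 ≤ n := by omega
            have hkleR : (k:ℝ) + 2 ≤ (n:ℝ) := by exact_mod_cast hkle
            have hrr : t ≤ ((k:ℝ)+1)/n := hr
            rw [le_div_iff₀ hn0] at hrr
            rw [le_sub_iff_add_le, ← mul_le_mul_iff_left₀ hn0]
            have hexp : (t + 1/(n:ℝ)) * n = t*n + 1 := by field_simp
            rw [hexp, one_mul]
            nlinarith
        rw [hβ₀t, hβ₁t, one_mul, one_smul] at hzero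
        apply hyavoid k hk σ
        have hy' : y = -(P k + σ • (P (k+1) - P k)) :=
          eq_neg_of_add_eq_zero_left (by rwa [add_comm] at hzero)
        rw [hy', hAdef, hDdef]
        simp only [if_neg hc0, if_neg hcn]
        module
  have hNpos : ∀ t : ℝ, 0 ≤ t → t ≤ 1 → 0 < ‖N t‖ :=
    fun t h0 h1 => norm_pos_iff.mpr (hNne t h0 h1)
  set Θ : ℝ → E8 := fun t => ‖N t‖⁻¹ • N t with hΘdef
  set c : ℝ → ℝ := fun t => (α₀ t * α₁ t) * ‖N t‖ with hcdef
  -- continuity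
  have hMcont : Continuous M := by
    simp only [hMdef]
    apply continuous_const.add
    apply continuous_finset_sum
    intro j _
    exact ((continuous_clamp.comp ((continuous_const.mul continuous_id).sub
      continuous_const)).smul continuous_const)
  have hβ₀cont : Continuous β₀ := by
    by_cases h : P 0 = 0
    · simp only [hβ₀def, if_pos h]; exact continuous_const
    · simp only [hβ₀def, if_neg h]
      exact continuous_clamp.comp (continuous_const.mul continuous_id)
  have hβ₁cont : Continuous β₁ := by
    by_cases h : P n = 0
    · simp only [hβ₁def, if_pos h]; exact continuous_const
    · simp only [hβ₁def, if_neg h]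
      exact continuous_clamp.comp (continuous_const.mul (continuous_const.sub continuous_id))
  have hα₀cont : Continuous α₀ := by
    by_cases h : P 0 = 0
    · simp only [hα₀def, if_pos h]
      exact continuous_clamp.comp (continuous_const.mul continuous_id)
    · simp only [hα₀def, if_neg h]; exact continuous_const
  have hα₁cont : Continuous α₁ := by
    by_cases h : P n = 0
    · simp only [hα₁def, if_pos h]
      exact continuous_clamp.comp (continuous_const.mul (continuous_const.sub continuous_id))
    · simp only [hα₁def, if_neg h]; exact continuous_const
  have hNcont : Continuous N := by
    simp only [hNdef]
    exact hMcont.add ((hβ₀cont.mul hβ₁cont).smul continuous_const)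
  have hccont : Continuous c := by
    simp only [hcdef]
    exact (hα₀cont.mul hα₁cont).mul hNcont.norm
  have hΘcont : ContinuousOn Θ (Set.Icc 0 1) := by
    simp only [hΘdef]
    apply ContinuousOn.fun_smul
    · exact (hNcont.norm.continuousOn).inv₀ (fun t ht => (hNpos t ht.1 ht.2).ne')
    · exact hNcont.continuousOn
  -- coordinate zero
  have hpr : ∀ v : E8, pr0 v = v 0 := fun _ => rfl
  have hM00 : ∀ t, M t 0 = 0 := by
    intro t
    have h : pr0 (M t) = 0 := by
      simp only [hMdef]
      rw [map_add, map_sum]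
      simp [hpr, hP0, map_smul, map_sub]
    exact h
  have hN00 : ∀ t, N t 0 = 0 := by
    intro t
    have h : pr0 (N t) = 0 := by
      simp only [hNdef]
      rw [map_add, map_smul]
      rw [show pr0 (M t) = 0 from by rw [hpr]; exact hM00 t]
      rw [show pr0 y = 0 from by rw [hpr]; exact hy00]
      simp
    exact h
  have hΘsph : ∀ t ∈ Set.Icc (0:ℝ) 1, ‖Θ t‖ = 1 ∧ Θ t 0 = 0 := by
    intro t ht
    constructor
    · simp only [hΘdef]
      rw [norm_smul, Real.norm_eq_abs, abs_inv, abs_norm]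
      exact inv_mul_cancel₀ (hNpos t ht.1 ht.2).ne'
    · simp only [hΘdef]
      have happ : (‖N t‖⁻¹ • N t) 0 = ‖N t‖⁻¹ * N t 0 := rfl
      rw [happ, hN00, mul_zero]
  have hcol : ∀ t : ℝ, 0 ≤ t → t ≤ 1 → c t • Θ t = (α₀ t * α₁ t) • N t := by
    intro t h0 h1
    simp only [hcdef, hΘdef]
    rw [smul_smul, mul_assoc, mul_inv_cancel₀ (hNpos t h0 h1).ne', mul_one]
  have hα₁at0 : α₁ 0 = 1 := by
    simp only [hα₁def]; split
    · apply clamp_of_one_le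
      rw [sub_zero, mul_one]
      exact_mod_cast (by omega : 1 ≤ n)
    · rfl
  have hα₀at1 : α₀ 1 = 1 := by
    simp only [hα₀def]; split
    · apply clamp_of_one_le
      rw [mul_one]
      exact_mod_cast (by omega : 1 ≤ n)
    · rfl
  have hend0 : c 0 • Θ 0 = m 0 := by
    by_cases h0 : P 0 = 0
    · have hc0 : c 0 = 0 := by
        simp only [hcdef, hα₀def, if_pos h0]
        rw [mul_zero, clamp_of_nonpos (le_refl 0), zero_mul, zero_mul]
      rw [hc0, zero_smul, ← hPm0, h0]
    · rw [hcol 0 le_rfl zero_le_one]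
      have hα₀0 : α₀ 0 = 1 := by simp only [hα₀def, if_neg h0]
      have hβ₀0 : β₀ 0 = 0 := by
        simp only [hβ₀def, if_neg h0]
        rw [mul_zero, clamp_of_nonpos (le_refl 0)]
      have hM0 : M 0 = P 0 := by
        have h := hseg 0 (by omega) 0 (by norm_num) (by positivity)
        rw [h, show (n:ℝ)*0 - ((0:ℕ):ℝ) = 0 by norm_num,
          clamp_of_nonpos (le_refl 0), zero_smul, add_zero]
      have hN0 : N 0 = P 0 := by
        simp only [hNdef]
        rw [hM0, hβ₀0, zero_mul, zero_smul, add_zero]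
      rw [hα₀0, hα₁at0, one_mul, one_smul, hN0, hPm0]
  have hend1 : c 1 • Θ 1 = m 1 := by
    have hcast : (((n-1:ℕ)):ℝ) = (n:ℝ) - 1 := by
      rw [Nat.cast_sub (by omega)]; norm_num
    by_cases h1 : P n = 0
    · have hc1 : c 1 = 0 := by
        simp only [hcdef, hα₁def, if_pos h1]
        rw [sub_self, mul_zero, clamp_of_nonpos (le_refl 0)]
        ring
      rw [hc1, zero_smul, ← hPm1, h1]
    · rw [hcol 1 zero_le_one le_rfl]
      have hα₁1 : α₁ 1 = 1 := by simp only [hα₁def, if_neg h1]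
      have hβ₁1 : β₁ 1 = 0 := by
        simp only [hβ₁def, if_neg h1]
        rw [sub_self, mul_zero, clamp_of_nonpos (le_refl 0)]
      have hM1 : M 1 = P n := by
        have h := hseg (n-1) (by omega) 1 ?_ ?_
        · rw [h]
          rw [show (n:ℝ)*1 - ((n-1:ℕ):ℝ) = 1 by rw [hcast]; ring]
          rw [clamp_of_one_le (le_refl 1), one_smul]
          rw [show n - 1 + 1 = n from by omega]
          abel
        · rw [hcast, div_le_one hn0]; linarith
        · rw [hcast, le_div_iff₀ hn0]; linarith
      have hN1 : N 1 = P n := by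
        simp only [hNdef]
        rw [hM1, hβ₁1, mul_zero, zero_smul, add_zero]
      rw [hα₀at1, hα₁1, one_mul, one_smul, hN1, hPm1]
  refine ⟨c, Θ, hccont, hΘcont, hΘsph, hend0, hend1, ?_⟩
  intro t ht
  obtain ⟨k, hk, hl, hr⟩ := hsegex t ht.1 ht.2
  have hMt := hseg k hk t hl hr
  set σ := clamp ((n:ℝ)*t - k) with hσdef
  have hσ0 : 0 ≤ σ := clamp_nonneg _
  have hσ1 : σ ≤ 1 := clamp_le_one _
  have h1 : ‖m t - M t‖ ≤ 2*ε := by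
    have hmt : ‖m t - P k‖ ≤ ε := by
      apply hstep
      have e1 : ((k:ℝ)+1)/n - (k:ℝ)/n = 1/n := by ring
      rw [abs_of_nonneg (by linarith [hl])]
      show t - (k:ℝ)/n ≤ 1/n
      linarith [hr, e1.ge, e1.le]
    have hPM : ‖M t - P k‖ ≤ ε := by
      rw [hMt, add_sub_cancel_left, norm_smul, Real.norm_eq_abs, abs_of_nonneg hσ0]
      calc σ * ‖P (k+1) - P k‖ ≤ 1 * ε :=
        mul_le_mul hσ1 (hPadj k) (norm_nonneg _) one_pos.le
      _ = ε := one_mul _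
    calc ‖m t - M t‖ = ‖(m t - P k) + (P k - M t)‖ := by congr 1; abel
    _ ≤ ‖m t - P k‖ + ‖P k - M t‖ := norm_add_le _ _
    _ = ‖m t - P k‖ + ‖M t - P k‖ := by rw [norm_sub_rev (P k) (M t)]
    _ ≤ ε + ε := add_le_add hmt hPM
    _ = 2*ε := by ring
  have h2 : ‖M t - N t‖ ≤ 2*ε := by
    have : M t - N t = -((β₀ t * β₁ t) • y) := by simp only [hNdef]; abel
    rw [this, norm_neg, norm_smul, Real.norm_eq_abs, hynorm]
    have hββ0 : 0 ≤ β₀ t * β₁ t := mul_nonneg (hβ₀mem t).1 (hβ₁mem t).1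
    have hββ1 : β₀ t * β₁ t ≤ 1 := mul_le_one₀ (hβ₀mem t).2 (hβ₁mem t).1 (hβ₁mem t).2
    rw [abs_of_nonneg hββ0]
    calc (β₀ t * β₁ t) * (2*ε) ≤ 1 * (2*ε) :=
      mul_le_mul_of_nonneg_right hββ1 (by positivity)
    _ = 2*ε := one_mul _
  have hNm : ‖N t‖ ≤ ‖m t‖ + 4*ε := by
    calc ‖N t‖ = ‖m t + ((M t - m t) + (N t - M t))‖ := by congr 1; abel
    _ ≤ ‖m t‖ + ‖(M t - m t) + (N t - M t)‖ := norm_add_le _ _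
    _ ≤ ‖m t‖ + (‖M t - m t‖ + ‖N t - M t‖) := by
        gcongr; exact norm_add_le _ _
    _ = ‖m t‖ + (‖m t - M t‖ + ‖M t - N t‖) := by rw [norm_sub_rev (M t), norm_sub_rev (N t)]
    _ ≤ ‖m t‖ + (2*ε + 2*ε) := by gcongr
    _ = ‖m t‖ + 4*ε := by ring
  have hα0 : 0 ≤ α₀ t * α₁ t := mul_nonneg (hα₀mem t).1 (hα₁mem t).1
  have hα1 : α₀ t * α₁ t ≤ 1 := mul_le_one₀ (hα₀mem t).2 (hα₁mem t).1 (hα₁mem t).2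
  have h3 : (1 - α₀ t * α₁ t) * ‖N t‖ ≤ 5*ε := by
    by_cases hα : α₀ t * α₁ t = 1
    · rw [hα, sub_self, zero_mul]; positivity
    · have hsmall : ‖m t‖ ≤ ε := by
        have hone : α₀ t ≠ 1 ∨ α₁ t ≠ 1 := by
          by_contra hcon
          push_neg at hcon
          exact hα (by rw [hcon.1, hcon.2, mul_one])
        rcases hone with h | h
        · have hP00 : P 0 = 0 := by
            by_contra hne
            exact h (by simp only [hα₀def, if_neg hne])
          have hnt : (n:ℝ) * t ≤ 1 := by
            by_contra hgt
            push_neg at hgt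
            exact h (by simp only [hα₀def, if_pos hP00]; exact clamp_of_one_le hgt.le)
          have hm0 : m 0 = 0 := by rw [← hPm0]; exact hP00
          have := hstep t 0 (by
            rw [sub_zero, abs_of_nonneg ht.1, le_div_iff₀ hn0]
            linarith [hnt])
          rwa [hm0, sub_zero] at this
        · have hPn0 : P n = 0 := by
            by_contra hne
            exact h (by simp only [hα₁def, if_neg hne])
          have hnt : (n:ℝ) * (1 - t) ≤ 1 := by
            by_contra hgt
            push_neg at hgt
            exact h (by simp only [hα₁def, if_pos hPn0]; exact clamp_of_one_le hgt.le)
          have hm1 : m 1 = 0 := by rw [← hPm1]; exact hPn0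
          have := hstep t 1 (by
            rw [abs_of_nonpos (by linarith [ht.2]), neg_sub, le_div_iff₀ hn0]
            nlinarith [hnt])
          rwa [hm1, sub_zero] at this
      have hN5 : ‖N t‖ ≤ 5*ε := by
        calc ‖N t‖ ≤ ‖m t‖ + 4*ε := hNm
        _ ≤ ε + 4*ε := by linarith
        _ = 5*ε := by ring
      calc (1 - α₀ t * α₁ t) * ‖N t‖ ≤ 1 * (5*ε) :=
        mul_le_mul (by linarith) hN5 (norm_nonneg _) one_pos.le
      _ = 5*ε := one_mul _
  have hlast : ‖N t - c t • Θ t‖ = (1 - α₀ t * α₁ t) * ‖N t‖ := by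
    rw [hcol t ht.1 ht.2]
    rw [show N t - (α₀ t * α₁ t) • N t = (1 - α₀ t * α₁ t) • N t from by
      rw [sub_smul, one_smul]]
    rw [norm_smul, Real.norm_eq_abs, abs_of_nonneg (by linarith)]
  calc ‖m t - c t • Θ t‖
      = ‖(m t - M t) + (M t - N t) + (N t - c t • Θ t)‖ := by congr 1; abel
    _ ≤ ‖(m t - M t) + (M t - N t)‖ + ‖N t - c t • Θ t‖ := norm_add_le _ _
    _ ≤ ‖m t - M t‖ + ‖M t - N t‖ + ‖N t - c t • Θ t‖ := by
        gcongr; exact norm_add_le _ _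
    _ ≤ 2*ε + 2*ε + 5*ε := by
        rw [hlast]; gcongr
    _ = 9*ε := by ring
    _ < δ := by rw [hεdef]; linarith

open Octonion in
/-- every continuous path in `𝕆` can be uniformly approximated, to within any
`δ > 0`, by a circular lifting with the same endpoints. -/
theorem stmt6 (γ' : unitInterval → 𝕆) (hcont : Continuous γ') (δ : ℝ) (hδ : 0 < δ) :
    ∃ γ : unitInterval → ℂ, ∃ Θ : unitInterval → 𝕆,
      Continuous γ ∧ Continuous Θ ∧ (∀ t, Θ t ∈ sph) ∧
      tau (Θ 0) (γ 0) = γ' 0 ∧ tau (Θ 1) (γ 1) = γ' 1 ∧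
      ∀ t, onorm (γ' t - tau (Θ t) (γ t)) < δ := by
  classical
  set f : ℝ → E8 := fun t => octToE (γ' (Set.projIcc 0 1 zero_le_one t)) with hfdef
  have hfval : ∀ t : unitInterval, f ↑t = octToE (γ' t) := by
    intro t; simp only [hfdef]; rw [Set.projIcc_val]
  have hγuc : UniformContinuous γ' := CompactSpace.uniformContinuous_of_continuous hcont
  have hococ : UniformContinuous (octToE : 𝕆 → E8) :=
    (LinearMap.toContinuousLinearMap octToE).uniformContinuous
  have hfuc : UniformContinuous f :=
    hococ.comp (hγuc.comp (LipschitzWith.projIcc zero_le_one).uniformContinuous)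
  set e0 : E8 := EuclideanSpace.single 0 1 with he0def
  have he00 : e0 0 = 1 := by simp [he0def, EuclideanSpace.single_apply]
  set mfun : ℝ → E8 := fun t => f t - (f t 0) • e0 with hmdef
  have hmuc : UniformContinuous mfun := by
    apply hfuc.sub
    have h1 : UniformContinuous (fun t => f t 0) :=
      (LinearMap.toContinuousLinearMap pr0).uniformContinuous.comp hfuc
    exact (LinearMap.toContinuousLinearMap
      (LinearMap.toSpanSingleton ℝ E8 e0)).uniformContinuous.comp h1
  have hm0 : ∀ t, mfun t 0 = 0 := by
    intro t
    have happ : mfun t 0 = f t 0 - f t 0 * e0 0 := rfl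
    rw [happ, he00, mul_one, sub_self]
  obtain ⟨c, Θe, hccont, hΘcont, hΘsph, hend0, hend1, herr⟩ := euclid_main mfun hmuc hm0 hδ
  set γc : unitInterval → ℂ :=
    fun t => Complex.ofReal (f ↑t 0) + Complex.ofReal (c ↑t) * Complex.I with hγcdef
  have hre : ∀ t, (γc t).re = f ↑t 0 := by intro t; simp [hγcdef]
  have him' : ∀ t, (γc t).im = c ↑t := by intro t; simp [hγcdef]
  set Θo : unitInterval → 𝕆 := fun t => eToOct (Θe ↑t) with hΘodef
  have hmem : ∀ t : unitInterval, (t:ℝ) ∈ Set.Icc (0:ℝ) 1 := fun t => t.2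
  -- key identity
  have hkey : ∀ t : unitInterval,
      octToE (γ' t - tau (Θo t) (γc t)) = mfun ↑t - c ↑t • Θe ↑t := by
    intro t
    rw [map_sub]
    rw [show tau (Θo t) (γc t) = (γc t).re • (1:𝕆) + (γc t).im • Θo t from rfl]
    rw [map_add, map_smul, map_smul, octToE_one, hΘodef]
    rw [octToE_eToOct, hre t, him' t, hfval t]
    simp only [hmdef]
    rw [hfval t]
    rw [← he0def]
    abel
  -- continuity of γc
  have hcoe : Continuous (fun t : unitInterval => (t : ℝ)) := continuous_subtype_val
  have hf0cont : Continuous (fun t : unitInterval => f ↑t 0) := by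
    have heq : (fun t : unitInterval => f ↑t 0) = fun t => pr0 (octToE (γ' t)) :=
      funext fun t => by rw [hfval t]; rfl
    rw [heq]
    exact (LinearMap.toContinuousLinearMap pr0).continuous.comp
      (octToE_continuous.comp hcont)
  have hγccont : Continuous γc := by
    simp only [hγcdef]
    exact ((Complex.continuous_ofReal.comp hf0cont).add
      ((Complex.continuous_ofReal.comp (hccont.comp hcoe)).mul continuous_const))
  have hΘocont : Continuous Θo := by
    simp only [hΘodef]
    exact eToOct_continuous.comp hΘcont.restrict
  have hsph : ∀ t, Θo t ∈ sph := by
    intro t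
    obtain ⟨hn1, hz⟩ := hΘsph ↑t (hmem t)
    constructor
    · rw [show Θo t = eToOct (Θe ↑t) from rfl, onorm_eq, octToE_eToOct]
      exact hn1
    · show (Θe ↑t : E8) 0 = 0
      exact hz
  have hc0 : ((0 : unitInterval) : ℝ) = 0 := rfl
  have hc1 : ((1 : unitInterval) : ℝ) = 1 := rfl
  have hend0' : tau (Θo 0) (γc 0) = γ' 0 := by
    have h := hkey 0
    rw [hc0, hend0, sub_self] at h
    have h2 : γ' 0 - tau (Θo 0) (γc 0) = 0 := by
      apply octToE_injective
      rw [h, map_zero]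
    have h3 := sub_eq_zero.mp h2
    exact h3.symm
  have hend1' : tau (Θo 1) (γc 1) = γ' 1 := by
    have h := hkey 1
    rw [hc1, hend1, sub_self] at h
    have h2 : γ' 1 - tau (Θo 1) (γc 1) = 0 := by
      apply octToE_injective
      rw [h, map_zero]
    exact (sub_eq_zero.mp h2).symm
  refine ⟨γc, Θo, hγccont, hΘocont, hsph, hend0', hend1', ?_⟩
  intro t
  rw [onorm_eq, hkey t]
  exact herr ↑t (hmem t)
end
end

section
/- A nonempty open set O ⊆ 𝕆 is connected if and only if any two points of O can be joined by a circular lifting contained in O, i.e., for all x₀, x₁ ∈ O there exist continuous paths γ : [0,1] → ℂ and Θ : [0,1] → 𝕊 such that the path γ_Θ(t) := τ_{Θ(t)}(γ(t)) satisfies γ_Θ(0) = x₀, γ_Θ(1) = x₁, and γ_Θ([0,1]) ⊆ O. -/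
noncomputable section

namespace Octonion

/-! ### Component lemmas -/

lemma a_add (x y : 𝕆) : (x + y).a = x.a + y.a := rfl
lemma b_add (x y : 𝕆) : (x + y).b = x.b + y.b := rfl
lemma a_smul (r : ℝ) (x : 𝕆) : (r • x).a = r • x.a := rfl
lemma b_smul (r : ℝ) (x : 𝕆) : (r • x).b = r • x.b := rfl
lemma a_neg (x : 𝕆) : (-x).a = -x.a := rfl
lemma b_neg (x : 𝕆) : (-x).b = -x.b := rfl
lemma a_one : (1 : 𝕆).a = 1 := rfl
lemma b_one : (1 : 𝕆).b = 0 := rfl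

lemma isometry_toProd : Isometry toProd :=
  AddMonoidHomClass.isometry_of_norm toProdHom (fun _ => rfl)

lemma continuous_a : Continuous (fun x : 𝕆 => x.a) :=
  continuous_fst.comp isometry_toProd.continuous

lemma continuous_b : Continuous (fun x : 𝕆 => x.b) :=
  continuous_snd.comp isometry_toProd.continuous

/-! ### re / im lemmas -/

lemma re_add (x y : 𝕆) : re (x + y) = re x + re y := by
  simp [re, a_add]

lemma re_smul (r : ℝ) (x : 𝕆) : re (r • x) = r * re x := by
  simp [re, a_smul, Quaternion.re_smul, smul_eq_mul]

lemma re_neg (x : 𝕆) : re (-x) = - re x := by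
  simp [re, a_neg]

lemma re_one : re (1 : 𝕆) = 1 := rfl

lemma re_im (x : 𝕆) : re (im x) = 0 := by
  simp [re, im]

lemma im_add (x y : 𝕆) : im (x + y) = im x + im y := by
  refine Octonion.ext ?_ ?_
  · show (x.a + y.a).im = x.a.im + y.a.im
    simp
  · rfl

lemma im_smul (r : ℝ) (x : 𝕆) : im (r • x) = r • im x := by
  refine Octonion.ext ?_ ?_
  · show (r • x.a).im = r • x.a.im
    simp
  · rfl

lemma im_one : im (1 : 𝕆) = 0 := by
  refine Octonion.ext ?_ ?_
  · show (1 : Quaternion ℝ).im = 0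
    rfl
  · rfl

lemma re_smul_one_add_im (x : 𝕆) : re x • 1 + im x = x := by
  refine Octonion.ext ?_ ?_
  · show x.a.re • (1 : Quaternion ℝ) + x.a.im = x.a
    have h1 : x.a.re • (1 : Quaternion ℝ) = (x.a.re : Quaternion ℝ) := by
      apply Quaternion.ext <;> simp [Quaternion.re_one, Quaternion.imI_one, Quaternion.imJ_one, Quaternion.imK_one]
    rw [h1, Quaternion.re_add_im]
  · show x.a.re • (0 : Quaternion ℝ) + x.b = x.b
    simp

lemma im_eq_self {x : 𝕆} (hx : re x = 0) : im x = x := by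
  conv_rhs => rw [← re_smul_one_add_im x]
  rw [hx, zero_smul, zero_add]

/-! ### onorm lemmas -/

lemma normSq_eq (x : 𝕆) : normSq x = ‖x.a‖ * ‖x.a‖ + ‖x.b‖ * ‖x.b‖ := by
  rw [normSq, Quaternion.normSq_eq_norm_mul_self, Quaternion.normSq_eq_norm_mul_self]

lemma normSq_nonneg' (x : 𝕆) : 0 ≤ normSq x := by
  rw [normSq_eq]; positivity

lemma onorm_nonneg (x : 𝕆) : 0 ≤ onorm x := Real.sqrt_nonneg _

lemma onorm_eq_zero {x : 𝕆} : onorm x = 0 ↔ x = 0 := by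
  rw [onorm, Real.sqrt_eq_zero (normSq_nonneg' x)]
  constructor
  · intro h
    rw [normSq_eq] at h
    have h1 : ‖x.a‖ * ‖x.a‖ = 0 ∧ ‖x.b‖ * ‖x.b‖ = 0 :=
      (add_eq_zero_iff_of_nonneg (by positivity) (by positivity)).mp h
    refine Octonion.ext ?_ ?_
    · exact (by simpa [mul_self_eq_zero, norm_eq_zero] using h1.1 : x.a = 0)
    · exact (by simpa [mul_self_eq_zero, norm_eq_zero] using h1.2 : x.b = 0)
  · rintro rfl
    rw [normSq_eq, show (0 : 𝕆).a = 0 from rfl, show (0 : 𝕆).b = 0 from rfl]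
    simp

lemma normSq_smul (r : ℝ) (x : 𝕆) : normSq (r • x) = r ^ 2 * normSq x := by
  simp only [normSq_eq, a_smul, b_smul, norm_smul, Real.norm_eq_abs]
  have : |r| * |r| = r ^ 2 := by rw [← abs_mul, abs_mul_self]; ring
  ring_nf
  nlinarith [abs_mul_self r]

lemma onorm_smul (r : ℝ) (x : 𝕆) : onorm (r • x) = |r| * onorm x := by
  rw [onorm, onorm, normSq_smul, Real.sqrt_mul (sq_nonneg r), Real.sqrt_sq_eq_abs]

lemma onorm_neg (x : 𝕆) : onorm (-x) = onorm x := by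
  rw [show -x = (-1 : ℝ) • x from (neg_one_smul ℝ x).symm, onorm_smul]
  simp

lemma continuous_onorm : Continuous onorm := by
  have h : Continuous normSq := by
    simp only [funext normSq_eq]
    exact ((continuous_a.norm.mul continuous_a.norm).add
      (continuous_b.norm.mul continuous_b.norm))
  exact Real.continuous_sqrt.comp h

lemma ne_zero_of_mem_sph {I : 𝕆} (hI : I ∈ sph) : I ≠ 0 := by
  intro h
  have h1 : onorm I = 1 := hI.1
  rw [h, show onorm (0 : 𝕆) = 0 from onorm_eq_zero.mpr rfl] at h1
  exact zero_ne_one h1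

lemma neg_mem_sph {I : 𝕆} (hI : I ∈ sph) : -I ∈ sph :=
  ⟨by rw [onorm_neg]; exact hI.1, by rw [re_neg, hI.2, neg_zero]⟩

lemma normalize_mem_sph {x : 𝕆} (hx : x ≠ 0) (hre : re x = 0) : (onorm x)⁻¹ • x ∈ sph := by
  have hn : onorm x ≠ 0 := fun h => hx (onorm_eq_zero.mp h)
  refine ⟨?_, by rw [re_smul, hre, mul_zero]⟩
  rw [onorm_smul, abs_inv, abs_of_nonneg (onorm_nonneg x), inv_mul_cancel₀ hn]

lemma onorm_smul_normalize {x : 𝕆} (hx : x ≠ 0) : onorm x • ((onorm x)⁻¹ • x) = x := by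
  have hn : onorm x ≠ 0 := fun h => hx (onorm_eq_zero.mp h)
  rw [smul_smul, mul_inv_cancel₀ hn, one_smul]

/-! ### Basis imaginary units -/

def e₁ : 𝕆 := ⟨⟨0, 1, 0, 0⟩, 0⟩
def e₂ : 𝕆 := ⟨⟨0, 0, 1, 0⟩, 0⟩

lemma e₁_mem : e₁ ∈ sph := by
  constructor
  · show Real.sqrt (Quaternion.normSq ⟨0,1,0,0⟩ + Quaternion.normSq 0) = 1
    rw [Quaternion.normSq_def']
    rw [Quaternion.normSq_def' (⟨0,1,0,0⟩ : Quaternion ℝ)]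
    norm_num [Quaternion.re_zero, Quaternion.imI_zero, Quaternion.imJ_zero, Quaternion.imK_zero]
  · rfl

lemma e₂_mem : e₂ ∈ sph := by
  constructor
  · show Real.sqrt (Quaternion.normSq ⟨0,0,1,0⟩ + Quaternion.normSq 0) = 1
    rw [Quaternion.normSq_def']
    rw [Quaternion.normSq_def' (⟨0,0,1,0⟩ : Quaternion ℝ)]
    norm_num [Quaternion.re_zero, Quaternion.imI_zero, Quaternion.imJ_zero, Quaternion.imK_zero]
  · rfl

lemma e₁_ne_e₂ : e₁ ≠ e₂ := by
  intro h
  have := congrArg (fun x : 𝕆 => x.a.imI) h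
  simp [e₁, e₂] at this

lemma e₁_ne_neg_e₂ : e₁ ≠ -e₂ := by
  intro h
  have := congrArg (fun x : 𝕆 => x.a.imI) h
  change (1:ℝ) = -0 at this
  simp at this

/-! ### Paths in the sphere -/

lemma comb_ne_zero {I J : 𝕆} (hI : I ∈ sph) (hJ : J ∈ sph) (hIJ : I ≠ -J) {t : ℝ}
    (h0 : 0 ≤ t) (h1 : t ≤ 1) : (1 - t) • I + t • J ≠ 0 := by
  intro h
  have h2 : (1 - t) • I = t • (-J) := by
    rw [smul_neg]
    exact eq_neg_of_add_eq_zero_left h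
  have h3 := congrArg onorm h2
  rw [onorm_smul, onorm_smul, hI.1, onorm_neg, hJ.1, mul_one, mul_one,
    abs_of_nonneg (by linarith), abs_of_nonneg h0] at h3
  have ht : t = 1 / 2 := by linarith
  apply hIJ
  have h4 := congrArg (fun x => (2 : ℝ) • x) h2
  simp only [smul_smul, ht] at h4
  norm_num at h4
  exact h4

lemma sph_arc {I J : 𝕆} (hI : I ∈ sph) (hJ : J ∈ sph) (hIJ : I ≠ -J) :
    ∃ p : Path I J, ∀ t, p t ∈ sph := by
  set m : unitInterval → 𝕆 := fun t => (1 - (t : ℝ)) • I + (t : ℝ) • J with hm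
  have hmne : ∀ t, m t ≠ 0 := fun t => comb_ne_zero hI hJ hIJ t.2.1 t.2.2
  have hrem : ∀ t, re (m t) = 0 := fun t => by
    simp [hm, re_add, re_smul, hI.2, hJ.2]
  have hcm : Continuous m := by
    apply Continuous.add
    · exact (continuous_const.sub continuous_subtype_val).smul continuous_const
    · exact continuous_subtype_val.smul continuous_const
  have hon : ∀ t, onorm (m t) ≠ 0 := fun t h => hmne t (onorm_eq_zero.mp h)
  have hc : Continuous fun t : unitInterval => (onorm (m t))⁻¹ • m t :=
    ((continuous_onorm.comp hcm).inv₀ hon).smul hcm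
  refine ⟨⟨⟨fun t => (onorm (m t))⁻¹ • m t, hc⟩, ?_, ?_⟩,
    fun t => normalize_mem_sph (hmne t) (hrem t)⟩
  · show (onorm (m 0))⁻¹ • m 0 = I
    have h0 : m 0 = I := by simp [hm]
    rw [h0, hI.1]
    norm_num
  · show (onorm (m 1))⁻¹ • m 1 = J
    have h1 : m 1 = J := by simp [hm]
    rw [h1, hJ.1]
    norm_num

lemma sph_joined {I J : 𝕆} (hI : I ∈ sph) (hJ : J ∈ sph) :
    ∃ p : Path I J, ∀ t, p t ∈ sph := by
  by_cases hIJ : I = -J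
  · obtain ⟨K, hK, hKI, hKJ⟩ : ∃ K ∈ sph, I ≠ -K ∧ K ≠ -J := by
      by_cases h2 : I = e₂ ∨ I = -e₂
      · refine ⟨e₁, e₁_mem, ?_, ?_⟩
        · rcases h2 with h | h <;> rw [h]
          · intro hh
            exact e₁_ne_neg_e₂ (by rw [hh, neg_neg])
          · intro hh
            exact e₁_ne_e₂ (neg_injective hh).symm
        · rw [← hIJ]
          rcases h2 with h | h <;> rw [h]
          · exact e₁_ne_e₂
          · exact e₁_ne_neg_e₂
      · push_neg at h2
        refine ⟨e₂, e₂_mem, ?_, ?_⟩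
        · intro hh
          exact h2.2 hh
        · rw [← hIJ]
          exact fun hh => h2.1 hh.symm
    obtain ⟨p₁, hp₁⟩ := sph_arc hI hK hKI
    have hKJ' : K ≠ -J := hKJ
    obtain ⟨p₂, hp₂⟩ := sph_arc hK hJ hKJ'
    refine ⟨p₁.trans p₂, fun t => ?_⟩
    have hmem : (p₁.trans p₂) t ∈ Set.range (p₁.trans p₂) := ⟨t, rfl⟩
    rw [Path.trans_range] at hmem
    rcases hmem with ⟨s, hs⟩ | ⟨s, hs⟩
    · rw [← hs]; exact hp₁ s
    · rw [← hs]; exact hp₂ s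
  · exact sph_arc hI hJ hIJ

/-! ### tau lemmas -/

lemma re_tau {I : 𝕆} (hI : re I = 0) (z : ℂ) : re (tau I z) = z.re := by
  rw [tau, re_add, re_smul, re_smul, re_one, hI, mul_one, mul_zero, add_zero]

lemma im_tau {I : 𝕆} (hI : re I = 0) (z : ℂ) : im (tau I z) = z.im • I := by
  rw [tau, im_add, im_smul, im_smul, im_one, smul_zero, zero_add, im_eq_self hI]

lemma tau_conj (I : 𝕆) (z : ℂ) : tau (-I) ((starRingEnd ℂ) z) = tau I z := by
  rw [tau, tau, Complex.conj_re, Complex.conj_im, smul_neg, neg_smul, neg_neg]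

/-! ### Complex helper -/

def cx (aa bb : ℝ) : ℂ := ⟨aa, bb⟩

@[simp] lemma cx_re (aa bb : ℝ) : (cx aa bb).re = aa := rfl
@[simp] lemma cx_im (aa bb : ℝ) : (cx aa bb).im = bb := rfl

lemma continuous_cx {α : Type*} [TopologicalSpace α] {f g : α → ℝ}
    (hf : Continuous f) (hg : Continuous g) : Continuous fun t => cx (f t) (g t) := by
  have h : ∀ aa bb : ℝ, cx aa bb = (aa : ℂ) + (bb : ℂ) * Complex.I := by
    intro aa bb
    apply Complex.ext <;> simp [cx]
  simp only [h]
  exact (Complex.continuous_ofReal.comp hf).add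
    ((Complex.continuous_ofReal.comp hg).mul continuous_const)

/-! ### Liftings -/

def Lift (O : Set 𝕆) (x y : 𝕆) (f : unitInterval → ℂ × 𝕆) : Prop :=
  Continuous f ∧ (∀ t, (f t).2 ∈ sph) ∧ tau (f 0).2 (f 0).1 = x ∧ tau (f 1).2 (f 1).1 = y ∧
    ∀ t, tau (f t).2 (f t).1 ∈ O

def Jble (O : Set 𝕆) (x y : 𝕆) : Prop := ∃ f, Lift O x y f

lemma decompose (x : 𝕆) (hx : re x = 0) : ∃ W ∈ sph, ∃ c : ℝ, x = c • W := by
  by_cases hx0 : x = 0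
  · exact ⟨e₁, e₁_mem, 0, by rw [hx0, zero_smul]⟩
  · exact ⟨_, normalize_mem_sph hx0 hx, onorm x, (onorm_smul_normalize hx0).symm⟩

lemma seg_lift (u v : 𝕆) : ∃ f : unitInterval → ℂ × 𝕆, Continuous f ∧ (∀ t, (f t).2 ∈ sph) ∧
    ∀ t : unitInterval, tau (f t).2 (f t).1 = u + (t : ℝ) • (v - u) := by
  by_cases h : ∃ W ∈ sph, ∃ c d : ℝ, im u = c • W ∧ im v = d • W
  · obtain ⟨W, hW, c, d, hc, hd⟩ := h
    refine ⟨fun t => (cx ((1 - (t : ℝ)) * re u + (t : ℝ) * re v)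
      ((1 - (t : ℝ)) * c + (t : ℝ) * d), W), ?_, fun _ => hW, fun t => ?_⟩
    · refine Continuous.prodMk (continuous_cx ?_ ?_) continuous_const <;>
      · apply Continuous.add
        · exact (continuous_const.sub continuous_subtype_val).mul continuous_const
        · exact continuous_subtype_val.mul continuous_const
    · show tau W (cx _ _) = _
      rw [tau, cx_re, cx_im]
      conv_rhs => rw [← re_smul_one_add_im u, ← re_smul_one_add_im v]
      rw [hc, hd]
      module
  · have hcol : ∀ r : ℝ, im u ≠ r • im v := by
      intro r hr
      obtain ⟨W, hW, d, hd⟩ := decompose (im v) (re_im v)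
      exact h ⟨W, hW, r * d, d, by rw [hr, hd, smul_smul], hd⟩
    have hvne : im v ≠ 0 := by
      intro hv
      obtain ⟨W, hW, c, hc⟩ := decompose (im u) (re_im u)
      exact h ⟨W, hW, c, 0, hc, by rw [hv, zero_smul]⟩
    set q : unitInterval → 𝕆 := fun t => im u + (t : ℝ) • (im v - im u) with hq
    have hqne : ∀ t, q t ≠ 0 := by
      intro t h0
      by_cases ht1 : (t : ℝ) = 1
      · rw [hq] at h0
        simp only [ht1, one_smul] at h0
        rw [add_sub_cancel] at h0
        exact hvne h0
      · apply hcol ((1 - (t : ℝ))⁻¹ * (t : ℝ) * (-1))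
        have h1 : (1 - (t : ℝ)) • im u = -((t : ℝ) • im v) := by
          have : (1 - (t : ℝ)) • im u + (t : ℝ) • im v = 0 := by
            rw [hq] at h0
            rw [← h0]
            module
          exact eq_neg_of_add_eq_zero_left this
        have h2 : (1 - (t : ℝ)) ≠ 0 := fun hh => ht1 (by linarith)
        have := congrArg (fun x => (1 - (t : ℝ))⁻¹ • x) h1
        simp only [smul_smul, inv_mul_cancel₀ h2, one_smul] at this
        rw [this]
        module
    have hqre : ∀ t, re (q t) = 0 := by
      intro t
      rw [hq]
      simp only []
      rw [re_add, re_smul]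
      have h1 : re (im v - im u) = 0 := by
        have : im v - im u = im v + (-1 : ℝ) • im u := by module
        rw [this, re_add, re_smul, re_im, re_im]
        ring
      rw [re_im, h1, mul_zero, add_zero]
    have hcq : Continuous q := by
      apply continuous_const.add
      exact continuous_subtype_val.smul continuous_const
    have hon : ∀ t, onorm (q t) ≠ 0 := fun t hh => hqne t (onorm_eq_zero.mp hh)
    refine ⟨fun t => (cx ((1 - (t : ℝ)) * re u + (t : ℝ) * re v) (onorm (q t)),
      (onorm (q t))⁻¹ • q t), ?_, fun t => normalize_mem_sph (hqne t) (hqre t), fun t => ?_⟩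
    · refine Continuous.prodMk (continuous_cx ?_ (continuous_onorm.comp hcq)) ?_
      · apply Continuous.add
        · exact (continuous_const.sub continuous_subtype_val).mul continuous_const
        · exact continuous_subtype_val.mul continuous_const
      · exact ((continuous_onorm.comp hcq).inv₀ hon).smul hcq
    · show tau _ (cx _ _) = _
      rw [tau, cx_re, cx_im, onorm_smul_normalize (hqne t)]
      conv_rhs => rw [← re_smul_one_add_im u, ← re_smul_one_add_im v]
      rw [hq]
      module

lemma Jble_refl {O : Set 𝕆} {x : 𝕆} (hx : x ∈ O) : Jble O x x := by
  obtain ⟨f, cf, sf, hτ⟩ := seg_lift x x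
  have key : ∀ t, tau (f t).2 (f t).1 = x := by
    intro t
    rw [hτ t, sub_self, smul_zero, add_zero]
  exact ⟨f, cf, sf, key 0, key 1, fun t => key t ▸ hx⟩

lemma Jble_symm {O : Set 𝕆} {x y : 𝕆} (h : Jble O x y) : Jble O y x := by
  obtain ⟨f, cf, sf, f0, f1, fO⟩ := h
  refine ⟨fun t => f (unitInterval.symm t), cf.comp unitInterval.continuous_symm,
    fun t => sf _, ?_, ?_, fun t => fO _⟩
  · show tau (f (unitInterval.symm 0)).2 (f (unitInterval.symm 0)).1 = y
    rw [unitInterval.symm_zero]; exact f1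
  · show tau (f (unitInterval.symm 1)).2 (f (unitInterval.symm 1)).1 = x
    rw [unitInterval.symm_one]; exact f0

lemma jble_of_ball {O : Set 𝕆} {u v : 𝕆} {ε : ℝ} (hb : Metric.ball u ε ⊆ O)
    (hv : v ∈ Metric.ball u ε) : Jble O u v := by
  obtain ⟨f, cf, sf, hτ⟩ := seg_lift u v
  have hseg : ∀ t : unitInterval, u + (t : ℝ) • (v - u) ∈ Metric.ball u ε := by
    intro t
    rw [Metric.mem_ball] at hv ⊢
    have h1 : dist (u + (t : ℝ) • (v - u)) u = ‖(t : ℝ) • (v - u)‖ := by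
      rw [dist_eq_norm, add_sub_cancel_left]
    rw [h1, norm_smul, Real.norm_eq_abs]
    have h2 : ‖v - u‖ = dist v u := (dist_eq_norm v u).symm
    have h3 : |(t : ℝ)| ≤ 1 := by
      rw [abs_of_nonneg t.2.1]; exact t.2.2
    calc |(t : ℝ)| * ‖v - u‖ ≤ 1 * ‖v - u‖ := by
          apply mul_le_mul_of_nonneg_right h3 (norm_nonneg _)
      _ = dist v u := by rw [one_mul, h2]
      _ < ε := hv
  refine ⟨f, cf, sf, ?_, ?_, fun t => hb (by rw [hτ t]; exact hseg t)⟩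
  · rw [hτ 0]
    simp
  · rw [hτ 1]
    simp

lemma glue {O : Set 𝕆} {x y z : 𝕆} {f g : unitInterval → ℂ × 𝕆}
    (hf : Lift O x y f) (hg : Lift O y z g) (hm : f 1 = g 0) :
    ∃ h, Lift O x z h ∧ h 0 = f 0 ∧ h 1 = g 1 := by
  obtain ⟨cf, sf, f0, f1, fO⟩ := hf
  obtain ⟨cg, sg, g0, g1, gO⟩ := hg
  let p₁ : Path (f 0) (f 1) := ⟨⟨f, cf⟩, rfl, rfl⟩
  let p₂ : Path (f 1) (g 1) := ⟨⟨g, cg⟩, hm.symm, rfl⟩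
  have hpt : ∀ t, ((p₁.trans p₂) t).2 ∈ sph ∧ tau ((p₁.trans p₂) t).2 ((p₁.trans p₂) t).1 ∈ O := by
    intro t
    have hmem : (p₁.trans p₂) t ∈ Set.range (p₁.trans p₂) := ⟨t, rfl⟩
    rw [Path.trans_range] at hmem
    rcases hmem with ⟨s, hs⟩ | ⟨s, hs⟩
    · have hs' : f s = (p₁.trans p₂) t := hs
      rw [← hs']
      exact ⟨sf s, fO s⟩
    · have hs' : g s = (p₁.trans p₂) t := hs
      rw [← hs']
      exact ⟨sg s, gO s⟩
  refine ⟨fun t => (p₁.trans p₂) t, ⟨(p₁.trans p₂).continuous, fun t => (hpt t).1, ?_, ?_,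
    fun t => (hpt t).2⟩, ?_, ?_⟩
  · show tau ((p₁.trans p₂) 0).2 ((p₁.trans p₂) 0).1 = x
    rw [show (p₁.trans p₂) 0 = f 0 from (p₁.trans p₂).source]
    exact f0
  · show tau ((p₁.trans p₂) 1).2 ((p₁.trans p₂) 1).1 = z
    rw [show (p₁.trans p₂) 1 = g 1 from (p₁.trans p₂).target]
    exact g1
  · exact (p₁.trans p₂).source
  · exact (p₁.trans p₂).target

lemma Jble_trans {O : Set 𝕆} {x y z : 𝕆} (h1 : Jble O x y) (h2 : Jble O y z) : Jble O x z := by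
  obtain ⟨f, hf⟩ := h1
  obtain ⟨g, hg⟩ := h2
  obtain ⟨cf, sf, f0, f1, fO⟩ := id hf
  obtain ⟨cg, sg, g0, g1, gO⟩ := id hg
  have hre : (f 1).1.re = (g 0).1.re := by
    rw [← re_tau (sf 1).2, f1, ← g0, re_tau (sg 0).2]
  have him : (f 1).1.im • (f 1).2 = (g 0).1.im • (g 0).2 := by
    rw [← im_tau (sf 1).2, f1, ← g0, im_tau (sg 0).2]
  by_cases hz : (f 1).1.im = 0
  · have hz2 : (g 0).1.im = 0 := by
      by_contra hh
      apply ne_zero_of_mem_sph (sg 0)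
      have h0 : (g 0).1.im • (g 0).2 = 0 := by rw [← him, hz, zero_smul]
      have := congrArg (fun w => ((g 0).1.im)⁻¹ • w) h0
      simpa [smul_smul, inv_mul_cancel₀ hh] using this
    have hζ : (f 1).1 = (g 0).1 := Complex.ext hre (by rw [hz, hz2])
    obtain ⟨p, hp⟩ := sph_joined (sf 1) (sg 0)
    set b : unitInterval → ℂ × 𝕆 := fun t => ((f 1).1, p t) with hbdef
    have hyO : y ∈ O := f1 ▸ fO 1
    have key : ∀ t, tau (p t) (f 1).1 = y := by
      intro t
      rw [← f1]
      simp [tau, hz]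
    have hb : Lift O y y b := by
      refine ⟨continuous_const.prodMk p.continuous, fun t => hp t, ?_, ?_, fun t => ?_⟩
      · exact key 0
      · exact key 1
      · rw [key t]; exact hyO
    have hm1 : f 1 = b 0 := by
      refine Prod.ext rfl ?_
      show (f 1).2 = p 0
      rw [p.source]
    obtain ⟨h, hh, h0, h1'⟩ := glue hf hb hm1
    have hm2 : h 1 = g 0 := by
      rw [h1']
      refine Prod.ext hζ ?_
      show p 1 = (g 0).2
      rw [p.target]
    obtain ⟨h', hh', _, _⟩ := glue hh hg hm2
    exact ⟨h', hh'⟩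
  · have hz2 : (g 0).1.im ≠ 0 := by
      intro hh
      apply ne_zero_of_mem_sph (sf 1)
      have h0 : (f 1).1.im • (f 1).2 = 0 := by rw [him, hh, zero_smul]
      have := congrArg (fun w => ((f 1).1.im)⁻¹ • w) h0
      simpa [smul_smul, inv_mul_cancel₀ hz] using this
    have habs : |(f 1).1.im| = |(g 0).1.im| := by
      have := congrArg onorm him
      rw [onorm_smul, onorm_smul, (sf 1).1, (sg 0).1, mul_one, mul_one] at this
      exact this
    rcases abs_eq_abs.mp habs with heq | hneg
    · have hI : (f 1).2 = (g 0).2 := by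
        have h0 : (f 1).1.im • (f 1).2 = (f 1).1.im • (g 0).2 := by
          rw [him, heq]
        have := congrArg (fun w => ((f 1).1.im)⁻¹ • w) h0
        simpa [smul_smul, inv_mul_cancel₀ hz] using this
      have hm : f 1 = g 0 := Prod.ext (Complex.ext hre heq) hI
      obtain ⟨h, hh, _, _⟩ := glue hf hg hm
      exact ⟨h, hh⟩
    · set g' : unitInterval → ℂ × 𝕆 := fun t => ((starRingEnd ℂ) (g t).1, -(g t).2) with hg'def
      have hg' : Lift O y z g' := by
        refine ⟨?_, fun t => neg_mem_sph (sg t), ?_, ?_, fun t => ?_⟩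
        · exact ((continuous_star.comp cg.fst)).prodMk cg.snd.neg
        · show tau (-(g 0).2) ((starRingEnd ℂ) (g 0).1) = y
          rw [tau_conj]; exact g0
        · show tau (-(g 1).2) ((starRingEnd ℂ) (g 1).1) = z
          rw [tau_conj]; exact g1
        · show tau (-(g t).2) ((starRingEnd ℂ) (g t).1) ∈ O
          rw [tau_conj]; exact gO t
      have hm : f 1 = g' 0 := by
        refine Prod.ext ?_ ?_
        · show (f 1).1 = (starRingEnd ℂ) (g 0).1
          apply Complex.ext
          · rw [Complex.conj_re]; exact hre
          · rw [Complex.conj_im]; rw [hneg]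
        · show (f 1).2 = -(g 0).2
          have h0 : (f 1).1.im • (f 1).2 = (f 1).1.im • (-(g 0).2) := by
            rw [him, hneg, neg_smul, smul_neg, neg_neg]
          have := congrArg (fun w => ((f 1).1.im)⁻¹ • w) h0
          simpa [smul_smul, inv_mul_cancel₀ hz] using this
      obtain ⟨h, hh, _, _⟩ := glue hf hg' hm
      exact ⟨h, hh⟩

end Octonion


open Octonion in
/-- a nonempty open set `O ⊆ 𝕆` is connected iff any two of its points are joined
by a circular lifting contained in `O`. -/
theorem stmt7 (O : Set 𝕆) (hne : O.Nonempty) (hO : IsOpen O) :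
    IsConnected O ↔
      ∀ x₀ ∈ O, ∀ x₁ ∈ O, ∃ γ : unitInterval → ℂ, ∃ Θ : unitInterval → 𝕆,
        Continuous γ ∧ Continuous Θ ∧ (∀ t, Θ t ∈ sph) ∧
        tau (Θ 0) (γ 0) = x₀ ∧ tau (Θ 1) (γ 1) = x₁ ∧
        ∀ t, tau (Θ t) (γ t) ∈ O := by
  constructor
  · intro hconn x₀ h₀ x₁ h₁
    suffices h : Jble O x₀ x₁ by
      obtain ⟨f, cf, sf, f0, f1, fO⟩ := h
      exact ⟨fun t => (f t).1, fun t => (f t).2, cf.fst, cf.snd, sf, f0, f1, fO⟩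
    set S := {y | y ∈ O ∧ Jble O x₀ y} with hSdef
    set T := {y | y ∈ O ∧ ¬ Jble O x₀ y} with hTdef
    have hS : IsOpen S := by
      rw [Metric.isOpen_iff]
      rintro y ⟨hyO, hy⟩
      obtain ⟨ε, hε, hball⟩ := Metric.isOpen_iff.mp hO y hyO
      exact ⟨ε, hε, fun z hz => ⟨hball hz, Jble_trans hy (jble_of_ball hball hz)⟩⟩
    have hT : IsOpen T := by
      rw [Metric.isOpen_iff]
      rintro y ⟨hyO, hy⟩
      obtain ⟨ε, hε, hball⟩ := Metric.isOpen_iff.mp hO y hyO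
      refine ⟨ε, hε, fun z hz => ⟨hball hz, fun hzj => ?_⟩⟩
      exact hy (Jble_trans hzj (Jble_symm (jble_of_ball hball hz)))
    have hcover : O ⊆ S ∪ T := by
      intro y hy
      by_cases hj : Jble O x₀ y
      · exact Or.inl ⟨hy, hj⟩
      · exact Or.inr ⟨hy, hj⟩
    by_contra hx₁
    obtain ⟨w, hwO, hwS, hwT⟩ := hconn.2 S T hS hT hcover ⟨x₀, h₀, h₀, Jble_refl h₀⟩
      ⟨x₁, h₁, h₁, hx₁⟩
    exact hwT.2 hwS.2
  · intro h
    obtain ⟨x, hx⟩ := hne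
    have hpc : IsPathConnected O := by
      refine ⟨x, hx, fun {y} hy => ?_⟩
      obtain ⟨γ, Θ, cγ, cΘ, hsph, h0, h1, hmem⟩ := h x hx y hy
      have cF : Continuous fun t => tau (Θ t) (γ t) := by
        simp only [tau]
        exact ((Complex.continuous_re.comp cγ).smul continuous_const).add
          ((Complex.continuous_im.comp cγ).smul cΘ)
      exact ⟨⟨⟨fun t => tau (Θ t) (γ t), cF⟩, h0, h1⟩, fun t => hmem t⟩
    exact hpc.isConnected
end
end
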